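/- arXiv:2309.10611 — 11 statements merged into one kernel-verified Lean document; each statement's English description precedes it below -/
import Mathlib

section
/- Let (B,+,0,−) be a K-loop and define s(x,y) = y + (−x + y). Then s satisfies the symmetric-space identities: s(x,x) = x, s(s(x,y),y) = x, and s(s(x,z), s(y,z)) = s(s(x,y), z) for all x, y, z ∈ B. -/
/-- In a K-loop `(B,+,0,−)`, the operation `s(x,y) = y + (−x + y)`
satisfies the symmetric-space identities. -/
theorem kloop_symmetric_space_identities {B : Type*}
    (add : B → B → B) (zero : B) (neg : B → B)
    (h0l : ∀ a, add zero a = a)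
    (h0r : ∀ a, add a zero = a)
    (huniql : ∀ a b, ∃! x, add x a = b)
    (huniqr : ∀ a b, ∃! y, add a y = b)
    (hbol : ∀ a b c, add a (add b (add a c)) = add (add a (add b a)) c)
    (haut : ∀ a b, neg (add a b) = add (neg a) (neg b))
    (hnl : ∀ a, add (neg a) a = zero)
    (hnr : ∀ a, add a (neg a) = zero)
    (hlinv : ∀ a x, add (neg a) (add a x) = x)
    (s : B → B → B)
    (hs : ∀ x y, s x y = add y (add (neg x) y)) :
    (∀ x, s x x = x) ∧
    (∀ x y, s (s x y) y = x) ∧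
    (∀ x y z, s (s x z) (s y z) = s (s x y) z) := by
  -- double negation
  have negneg : ∀ a, neg (neg a) = a := by
    intro a
    have h := hlinv (neg a) a
    rwa [hnl, h0r] at h
  -- other cancellation: a + (−a + w) = w
  have cancel : ∀ a w, add a (add (neg a) w) = w := by
    intro a w
    have h := hlinv (neg a) w
    rwa [negneg] at h
  -- key Bol consequence: L_{s x y} = L_y ∘ L_{−x} ∘ L_y
  have lem : ∀ x y w, add (s x y) w = add y (add (neg x) (add y w)) := by
    intro x y w
    rw [hs]
    exact (hbol y (neg x) w).symm
  -- negation of s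
  have negs : ∀ x y, neg (s x y) = s (neg x) (neg y) := by
    intro x y
    rw [hs, hs, haut, haut, negneg]
  refine ⟨?_, ?_, ?_⟩
  · intro x
    rw [hs, hnl, h0r]
  · intro x y
    rw [hs (s x y) y, negs]
    calc add y (add (s (neg x) (neg y)) y)
        = add y (add (neg y) (add (neg (neg x)) (add (neg y) y))) := by rw [lem]
      _ = x := by rw [negneg, hnl, h0r, cancel]
  · intro x y z
    rw [hs (s x z) (s y z), negs, lem (neg x) (neg z), negneg,
        hs y z, hlinv, ← hs y z, lem y z, cancel, hs (s x y) z, negs,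
        lem (neg x) (neg y), negneg]
end

section
/- Let (B,+,0,−) be a uniquely 2-divisible K-loop and define s(x,y) = y + (−x + y). Then for all a, b ∈ B there exists a unique z ∈ B with s(a,z) = b. Consequently (B,s) is a symétron. -/
/-- In a uniquely 2-divisible K-loop `(B,+,0,−)`, the operation
`s(x,y) = y + (−x + y)` admits unique midpoints, so `(B,s)` is a symétron. -/
theorem kloop_two_divisible_is_symetron {B : Type*}
    (add : B → B → B) (zero : B) (neg : B → B)
    (h0l : ∀ a, add zero a = a)
    (h0r : ∀ a, add a zero = a)
    (huniql : ∀ a b, ∃! x, add x a = b)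
    (huniqr : ∀ a b, ∃! y, add a y = b)
    (hbol : ∀ a b c, add a (add b (add a c)) = add (add a (add b a)) c)
    (haut : ∀ a b, neg (add a b) = add (neg a) (neg b))
    (hnl : ∀ a, add (neg a) a = zero)
    (hnr : ∀ a, add a (neg a) = zero)
    (hlinv : ∀ a x, add (neg a) (add a x) = x)
    (hdiv : Function.Bijective (fun x : B => add x x))
    (s : B → B → B)
    (hs : ∀ x y, s x y = add y (add (neg x) y)) :
    (∀ a b : B, ∃! z : B, s a z = b) ∧
    (∀ x, s x x = x) ∧
    (∀ x y, s (s x y) y = x) ∧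
    (∀ x y z, s (s x z) (s y z) = s (s x y) z) := by
  -- double negation
  have hnn : ∀ a, neg (neg a) = a := by
    intro a
    have h := huniqr (neg a) zero
    exact (h.unique (hnr (neg a)) (hnl a))
  -- the other left inverse property
  have hlinv' : ∀ a x, add a (add (neg a) x) = x := by
    intro a x
    have h := hlinv (neg a) x
    rwa [hnn] at h
  -- neg zero = zero
  have hz : neg zero = zero := by
    have h1 := hnl zero
    have h2 := h0r (neg zero)
    rw [h2] at h1
    exact h1
  -- s zero w = w + w
  have hs0 : ∀ w, s zero w = add w w := by
    intro w
    rw [hs, hz, h0l]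
  -- idempotence
  have hP2 : ∀ x, s x x = x := by
    intro x
    rw [hs, hnl, h0r]
  -- involution property : s (s x y) y = x
  have hP3 : ∀ x y, s (s x y) y = x := by
    intro x y
    have hb := hbol (neg y) x y
    rw [hnl, h0r] at hb
    -- hb : add (neg y) x = add (add (neg y) (add x (neg y))) y
    rw [hs (s x y) y, hs x y, haut, haut, hnn, ← hb, hlinv']
  -- mu computations : mu a c = add a (neg c)
  have hmumu : ∀ a c, add a (neg (add a (neg c))) = c := by
    intro a c
    rw [haut, hnn, hlinv']
  have hconj : ∀ a b c,
      add a (neg (add b (neg (add a (neg c))))) = add (s b a) (neg c) := by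
    intro a b c
    rw [haut b, hnn, hbol, ← hs]
  -- extensionality via mu at zero
  have hext : ∀ p q : B, (∀ c, add p (neg c) = add q (neg c)) → p = q := by
    intro p q h
    have := h zero
    rwa [hz, h0r, h0r] at this
  -- the distributivity law
  have hP4 : ∀ x y z, s (s x z) (s y z) = s (s x y) z := by
    intro x y z
    apply hext
    intro c
    simp only [← hconj, hmumu]
  refine ⟨?_, hP2, hP3, hP4⟩
  -- unique midpoints
  intro a b
  obtain ⟨u, hu⟩ := hdiv.surjective a
  have hu' : add u u = a := hu
  obtain ⟨v, hv⟩ := hdiv.surjective (s b u)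
  have hv' : add v v = s b u := hv
  have ha : s zero u = a := by rw [hs0]; exact hu'
  -- key reduction: s (s a z') u = s zero (s z' u)
  have hkey : ∀ z', s (s a z') u = s zero (s z' u) := by
    intro z'
    have h1 := hP4 (s zero u) z' u
    rw [hP3 zero u] at h1
    rw [← ha]
    exact h1.symm
  have hinj : ∀ p q : B, s p u = s q u → p = q := by
    intro p q h
    rw [← hP3 p u, h, hP3]
  refine ⟨s v u, ?_, ?_⟩
  · apply hinj
    rw [hkey, hP3, hs0]
    exact hv'
  · intro z' hz'
    have h2 : s zero (s z' u) = s b u := by rw [← hkey, hz']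
    rw [hs0] at h2
    have h3 : s z' u = v := by
      apply hdiv.injective
      show add (s z' u) (s z' u) = add v v
      rw [h2, hv']
    rw [← hP3 z' u, h3]
end

section
/- Let B be a fixed-point-free K-loop. Then for all a, b ∈ B: a + b = b + a if and only if δ_{a,b} = Id. -/
/-- In a fixed-point-free K-loop, `a + b = b + a` iff the
precession map `δ_{a,b}` is the identity. -/
theorem fpf_kloop_comm_iff_delta_eq_one {B : Type*}
    (add : B → B → B) (zero : B) (neg : B → B)
    (h0l : ∀ a, add zero a = a)
    (h0r : ∀ a, add a zero = a)
    (huniql : ∀ a b, ∃! x, add x a = b)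
    (huniqr : ∀ a b, ∃! y, add a y = b)
    (hbol : ∀ a b c, add a (add b (add a c)) = add (add a (add b a)) c)
    (haut : ∀ a b, neg (add a b) = add (neg a) (neg b))
    (hnl : ∀ a, add (neg a) a = zero)
    (hnr : ∀ a, add a (neg a) = zero)
    (hlinv : ∀ a x, add (neg a) (add a x) = x)
    -- the precession maps, characterized by a+(b+c) = (a+b)+δ_{a,b}(c)
    (δ : B → B → Equiv.Perm B)
    (hdelta : ∀ a b c, add a (add b c) = add (add a b) (δ a b c))
    -- fixed-point-freeness: any element of D(B) fixing a nonzero point is the identity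
    (hfpf : ∀ φ ∈ Subgroup.closure (Set.range fun p : B × B => δ p.1 p.2),
      (∃ c, c ≠ zero ∧ φ c = c) → φ = 1)
    -- standard K-loop facts about precession maps
    (hdinv : ∀ a b, (δ a b)⁻¹ = δ b a)
    (hdneg : ∀ a, δ a (neg a) = 1)
    (hdcomm : ∀ a b, add a b = δ a b (add b a)) :
    ∀ a b : B, add a b = add b a ↔ δ a b = 1 := by
  intro a b
  constructor
  · intro hcomm
    by_cases hz : add a b = zero
    · -- then b = neg a, since a + y = zero has a unique solution
      obtain ⟨y, _, huniq⟩ := huniqr a zero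
      have hb : b = neg a := (huniq b hz).trans (huniq (neg a) (hnr a)).symm
      rw [hb]; exact hdneg a
    · apply hfpf
      · exact Subgroup.subset_closure ⟨(a, b), rfl⟩
      · refine ⟨add a b, hz, ?_⟩
        conv_lhs => rw [hcomm]
        exact (hdcomm a b).symm
  · intro h1
    calc add a b = δ a b (add b a) := hdcomm a b
    _ = add b a := by rw [h1]; rfl
end

section
/- Let B be a fixed-point-free K-loop and x ∈ B. If b ∈ C_B(x), then b·n ∈ C_B(x) for every integer n; in particular b·n + x = x + (b·n) and b·n + (−x) = (−x) + (b·n) for all n ∈ ℤ. -/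
/-- Natural-number iterate `a·n` in a loop: `a·0 = 0`, `a·(n+1) = a + a·n`. -/
def nIter {B : Type*} (add : B → B → B) (zero : B) (a : B) : ℕ → B
  | 0 => zero
  | n + 1 => add a (nIter add zero a n)

/-- Integer iterate `a·n`: for `n ≥ 0` it is the `n`-th iterate of `a`,
for `n < 0` the `(−n)`-th iterate of `−a`. -/
def zIter {B : Type*} (add : B → B → B) (zero : B) (neg : B → B) (a : B) (n : ℤ) : B :=
  if 0 ≤ n then nIter add zero a n.toNat else nIter add zero (neg a) (-n).toNat

/-- In a fixed-point-free K-loop, the centralizer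
`C_B(x) = {b : δ_{x,b} = Id ∧ δ_{−x,b} = Id}` is closed under the maps `b ↦ b·n`
for all integers `n`; in particular `b·n` commutes with `x` and with `−x`. -/
theorem fpf_kloop_centralizer_closed_under_iterates {B : Type*}
    (add : B → B → B) (zero : B) (neg : B → B)
    (h0l : ∀ a, add zero a = a)
    (h0r : ∀ a, add a zero = a)
    (huniql : ∀ a b, ∃! x, add x a = b)
    (huniqr : ∀ a b, ∃! y, add a y = b)
    (hbol : ∀ a b c, add a (add b (add a c)) = add (add a (add b a)) c)
    (haut : ∀ a b, neg (add a b) = add (neg a) (neg b))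
    (hnl : ∀ a, add (neg a) a = zero)
    (hnr : ∀ a, add a (neg a) = zero)
    (hlinv : ∀ a x, add (neg a) (add a x) = x)
    (δ : B → B → Equiv.Perm B)
    (hdelta : ∀ a b c, add a (add b c) = add (add a b) (δ a b c))
    (hfpf : ∀ φ ∈ Subgroup.closure (Set.range fun p : B × B => δ p.1 p.2),
      (∃ c, c ≠ zero ∧ φ c = c) → φ = 1)
    (x : B) (b : B)
    (hb : δ x b = 1 ∧ δ (neg x) b = 1) :
    ∀ n : ℤ,
      (δ x (zIter add zero neg b n) = 1 ∧ δ (neg x) (zIter add zero neg b n) = 1) ∧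
      add (zIter add zero neg b n) x = add x (zIter add zero neg b n) ∧
      add (zIter add zero neg b n) (neg x) = add (neg x) (zIter add zero neg b n) := by
  -- left cancellation
  have lcancel : ∀ a u v : B, add a u = add a v → u = v := by
    intro a u v h
    exact (huniqr a (add a v)).unique h rfl
  have negneg : ∀ a, neg (neg a) = a := by
    intro a
    apply lcancel (neg a)
    rw [hnr, hnl]
  have negzero : neg zero = zero := by
    have h := hnl zero
    rwa [h0r] at h
  -- right inverse composition
  have E : ∀ a y, add a (add (neg a) y) = y := by
    intro a y
    have h := hlinv (neg a) y
    rwa [negneg] at h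
  -- δ = 1 gives pointwise associativity
  have toA : ∀ u v, δ u v = 1 → ∀ c, add u (add v c) = add (add u v) c := by
    intro u v h c
    rw [hdelta u v c, h]
    simp
  -- pointwise associativity gives δ = 1
  have Ciff : ∀ u v, (∀ c, add u (add v c) = add (add u v) c) → δ u v = 1 := by
    intro u v h
    apply Equiv.ext
    intro c
    have hd := hdelta u v c
    rw [h c] at hd
    have h2 := lcancel (add u v) c (δ u v c) hd
    simpa using h2.symm
  -- AIP transport of associativity
  have Aneg : ∀ u v, (∀ c, add u (add v c) = add (add u v) c) →
      ∀ c, add (neg u) (add (neg v) c) = add (add (neg u) (neg v)) c := by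
    intro u v h c
    have h1 := congrArg neg (h (neg c))
    simp only [haut, negneg] at h1
    exact h1
  -- translations by powers are iterates
  have gpow2 : ∀ (a : B) (n : ℕ),
      (∀ c, add (nIter add zero a n) c = (add a)^[n] c) ∧
      (∀ c, add (nIter add zero a (n + 1)) c = (add a)^[n + 1] c) := by
    intro a n
    induction n with
    | zero =>
      constructor
      · intro c
        show add zero c = c
        exact h0l c
      · intro c
        show add (add a zero) c = (add a)^[1] c
        rw [h0r, Function.iterate_one]
    | succ k ih =>
      refine ⟨ih.2, ?_⟩
      intro c
      have hB := hbol a (nIter add zero a k) c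
      have e1 : add (nIter add zero a k) (add a c) = (add a)^[k + 1] c := by
        rw [ih.1 (add a c)]
        exact (Function.iterate_succ_apply (add a) k c).symm
      have e2 : add (nIter add zero a k) a = nIter add zero a (k + 1) := by
        have h1 := ih.1 a
        have h2 := ih.2 zero
        rw [h0r] at h2
        rw [h1, h2, Function.iterate_succ_apply, h0r]
      rw [e1, e2] at hB
      rw [← Function.iterate_succ_apply' (add a) (k + 1) c] at hB
      exact hB.symm
  have negpow : ∀ (a : B) (n : ℕ),
      neg (nIter add zero a n) = nIter add zero (neg a) n := by
    intro a n
    induction n with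
    | zero => exact negzero
    | succ k ih =>
      show neg (add a (nIter add zero a k)) = add (neg a) (nIter add zero (neg a) k)
      rw [haut, ih]
  have annih : ∀ (a : B) (n : ℕ),
      (add a)^[n] (nIter add zero (neg a) n) = zero := by
    intro a n
    induction n with
    | zero => rfl
    | succ k ih =>
      rw [Function.iterate_succ_apply]
      show (add a)^[k] (add a (add (neg a) (nIter add zero (neg a) k))) = zero
      rw [E, ih]
  -- master lemma for natural powers
  have master : ∀ x' b',
      (∀ c, add x' (add b' c) = add (add x' b') c) →
      (∀ c, add (neg x') (add b' c) = add (add (neg x') b') c) →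
      ∀ n : ℕ, δ x' (nIter add zero b' n) = 1 ∧
        add x' (nIter add zero b' n) = add (nIter add zero b' n) x' := by
    intro x' b' H1 H2
    -- K1inv : g_{-b'} g_{-x'} = g_{-(x'+b')}
    have K1inv : ∀ c, add (neg b') (add (neg x') c) = add (neg (add x' b')) c := by
      intro c
      apply lcancel (add x' b')
      rw [E, ← H1, E, E]
    have K3 := Aneg x' b' H1
    -- g_{b'} commutes with g_{-x'}
    have K8 : ∀ c, add b' (add (neg x') c) = add (neg x') (add b' c) := by
      intro c
      have h : add (neg b') (add (neg x') (add b' c)) = add (neg x') c := by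
        rw [K1inv, haut, ← K3, hlinv]
      have h2 := congrArg (add b') h
      rw [E] at h2
      exact h2.symm
    -- K2inv : g_{-b'} g_{x'} = g_{-(-x'+b')}
    have K2inv : ∀ c, add (neg b') (add x' c) = add (neg (add (neg x') b')) c := by
      intro c
      apply lcancel (add (neg x') b')
      rw [E, ← H2, E, hlinv]
    have K4 : ∀ c, add x' (add (neg b') c) = add (add x' (neg b')) c := by
      intro c
      have h := Aneg (neg x') b' H2 c
      rwa [negneg] at h
    -- g_{b'} commutes with g_{x'}
    have K7 : ∀ c, add b' (add x' c) = add x' (add b' c) := by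
      intro c
      have h : add (neg b') (add x' (add b' c)) = add x' c := by
        rw [K2inv, haut, negneg, ← K4, hlinv]
      have h2 := congrArg (add b') h
      rw [E] at h2
      exact h2.symm
    have K7it : ∀ (n : ℕ) (c : B), (add b')^[n] (add x' c) = add x' ((add b')^[n] c) := by
      intro n
      induction n with
      | zero => intro c; rfl
      | succ k ih =>
        intro c
        rw [Function.iterate_succ_apply, Function.iterate_succ_apply]
        show (add b')^[k] (add b' (add x' c)) = add x' ((add b')^[k] (add b' c))
        rw [K7 c]
        exact ih (add b' c)
    have K8it : ∀ (n : ℕ) (c : B),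
        (add b')^[n] (add (neg x') c) = add (neg x') ((add b')^[n] c) := by
      intro n
      induction n with
      | zero => intro c; rfl
      | succ k ih =>
        intro c
        rw [Function.iterate_succ_apply, Function.iterate_succ_apply]
        show (add b')^[k] (add b' (add (neg x') c)) = add (neg x') ((add b')^[k] (add b' c))
        rw [K8 c]
        exact ih (add b' c)
    intro n
    constructor
    · -- δ x' (b'·n) = 1
      cases n with
      | zero =>
        apply Ciff
        intro c
        show add x' (add zero c) = add (add x' zero) c
        rw [h0l, h0r]
      | succ m =>
        by_cases ht : add x' (nIter add zero b' (m + 1)) = zero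
        · have hp : nIter add zero b' (m + 1) = neg x' := by
            apply lcancel x'
            rw [hnr]
            exact ht
          rw [hp]
          apply Ciff
          intro c
          rw [E, hnr, h0l]
        · have hcomp : add (nIter add zero b' (m + 1))
              (neg (add x' (nIter add zero b' (m + 1)))) = neg x' := by
            rw [haut, negpow b' (m + 1), (gpow2 b' (m + 1)).1, K8it (m + 1),
              annih b' (m + 1), h0r]
          have hfix : δ x' (nIter add zero b' (m + 1))
              (neg (add x' (nIter add zero b' (m + 1)))) =
              neg (add x' (nIter add zero b' (m + 1))) := by
            have hd := hdelta x' (nIter add zero b' (m + 1))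
              (neg (add x' (nIter add zero b' (m + 1))))
            rw [hcomp, hnr] at hd
            apply lcancel (add x' (nIter add zero b' (m + 1)))
            rw [← hd, hnr]
          refine hfpf _ (Subgroup.subset_closure ⟨(x', nIter add zero b' (m + 1)), rfl⟩)
            ⟨_, ?_, hfix⟩
          intro h
          apply ht
          rw [← negneg (add x' (nIter add zero b' (m + 1))), h, negzero]
    · -- commutation
      calc add x' (nIter add zero b' n)
          = add x' ((add b')^[n] zero) := by
            have h := (gpow2 b' n).1 zero
            rw [h0r] at h
            rw [h]
        _ = (add b')^[n] (add x' zero) := (K7it n zero).symm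
        _ = (add b')^[n] x' := by rw [h0r]
        _ = add (nIter add zero b' n) x' := ((gpow2 b' n).1 x').symm
  -- hypotheses in pointwise form
  have Hxb := toA x b hb.1
  have Hnxb := toA (neg x) b hb.2
  have Hxnb : ∀ c, add x (add (neg b) c) = add (add x (neg b)) c := by
    intro c
    have h := Aneg (neg x) b Hnxb c
    rwa [negneg] at h
  have Hnxnb := Aneg x b Hxb
  have Hnnxb : ∀ c, add (neg (neg x)) (add b c) = add (add (neg (neg x)) b) c := by
    intro c
    rw [negneg]
    exact Hxb c
  have Hnnxnb : ∀ c, add (neg (neg x)) (add (neg b) c) = add (add (neg (neg x)) (neg b)) c := by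
    intro c
    rw [negneg]
    exact Hxnb c
  intro n
  by_cases hn : 0 ≤ n
  · simp only [zIter, if_pos hn]
    obtain ⟨d1, c1⟩ := master x b Hxb Hnxb n.toNat
    obtain ⟨d2, c2⟩ := master (neg x) b Hnxb Hnnxb n.toNat
    exact ⟨⟨d1, d2⟩, c1.symm, c2.symm⟩
  · simp only [zIter, if_neg hn]
    obtain ⟨d1, c1⟩ := master x (neg b) Hxnb Hnxnb (-n).toNat
    obtain ⟨d2, c2⟩ := master (neg x) (neg b) Hnxnb Hnnxnb (-n).toNat
    exact ⟨⟨d1, d2⟩, c1.symm, c2.symm⟩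
end

section
/- Let B be a fixed-point-free K-loop and x ∈ B. Then Z(C_B(x)) is closed under + and under negation −, contains x·n for every integer n, and the restriction of + to Z(C_B(x)) is commutative and associative; thus (Z(C_B(x)), +, 0) is an abelian group containing the cyclic group generated by x. -/
/-- In a fixed-point-free K-loop, the center `Z(C_B(x))` of the
centralizer of `x` is closed under `+` and `−`, contains `x·n` for every
integer `n`, and `+` restricted to it is commutative and associative; thus it
is an abelian group containing the cyclic group generated by `x`. -/
theorem fpf_kloop_center_of_centralizer_abelian_group {B : Type*}
    (add : B → B → B) (zero : B) (neg : B → B)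
    (h0l : ∀ a, add zero a = a)
    (h0r : ∀ a, add a zero = a)
    (huniql : ∀ a b, ∃! x, add x a = b)
    (huniqr : ∀ a b, ∃! y, add a y = b)
    (hbol : ∀ a b c, add a (add b (add a c)) = add (add a (add b a)) c)
    (haut : ∀ a b, neg (add a b) = add (neg a) (neg b))
    (hnl : ∀ a, add (neg a) a = zero)
    (hnr : ∀ a, add a (neg a) = zero)
    (hlinv : ∀ a x, add (neg a) (add a x) = x)
    (δ : B → B → Equiv.Perm B)
    (hdelta : ∀ a b c, add a (add b c) = add (add a b) (δ a b c))
    (hfpf : ∀ φ ∈ Subgroup.closure (Set.range fun p : B × B => δ p.1 p.2),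
      (∃ c, c ≠ zero ∧ φ c = c) → φ = 1)
    (x : B)
    -- the centralizer C_B(x) and the center Z(C_B(x)) of the centralizer
    (C Z : Set B)
    (hC : C = {b : B | δ x b = 1 ∧ δ (neg x) b = 1})
    (hZ : Z = {b ∈ C | ∀ b' ∈ C, δ b b' = 1}) :
    (∀ a ∈ Z, ∀ b ∈ Z, add a b ∈ Z) ∧
    (∀ a ∈ Z, neg a ∈ Z) ∧
    (zero ∈ Z) ∧
    (∀ n : ℤ, zIter add zero neg x n ∈ Z) ∧
    (∀ a ∈ Z, ∀ b ∈ Z, add a b = add b a) ∧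
    (∀ a ∈ Z, ∀ b ∈ Z, ∀ c ∈ Z, add a (add b c) = add (add a b) c) := by
  have lcancel : ∀ a u v, add a u = add a v → u = v := fun a u v h =>
    (huniqr a (add a v)).unique h rfl
  have negneg : ∀ a, neg (neg a) = a := fun a =>
    (huniqr (neg a) zero).unique (hnr (neg a)) (hnl a)
  have ninj : ∀ a b, neg a = neg b → a = b := by
    intro a b h
    rw [← negneg a, h, negneg]
  have hlinv' : ∀ a c, add a (add (neg a) c) = c := by
    intro a c
    have h := hlinv (neg a) c
    rwa [negneg] at h
  have I4 : ∀ a b, δ a b (add (neg b) (neg a)) = add (neg a) (neg b) := by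
    intro a b
    apply lcancel (add a b)
    rw [← hdelta, hlinv', hnr, ← haut, hnr]
  have dinvol : ∀ a, δ a (neg a) = 1 := by
    intro a
    ext c
    have h := hdelta a (neg a) c
    rw [hlinv', hnr, h0l] at h
    simpa using h.symm
  have comm_of_delta : ∀ a b, δ a b = 1 → add a b = add b a := by
    intro a b h
    have h4 := I4 a b
    rw [h] at h4
    simp only [Equiv.Perm.coe_one, id_eq] at h4
    apply ninj
    rw [haut, haut]
    exact h4.symm
  have delta_of_comm : ∀ a b, add a b = add b a → δ a b = 1 := by
    intro a b hc
    by_cases hz : add (neg b) (neg a) = zero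
    · have hb : b = neg a := by
        have h := (huniqr (neg b) zero).unique hz (hnr (neg b))
        rw [negneg] at h
        exact h.symm
      rw [hb]
      exact dinvol a
    · exact hfpf _ (Subgroup.subset_closure ⟨(a, b), rfl⟩)
        ⟨add (neg b) (neg a), hz, by rw [I4, ← haut, hc, haut]⟩
  have assoc_of_delta : ∀ a b c, δ a b = 1 → add a (add b c) = add (add a b) c := by
    intro a b c h
    rw [hdelta a b c, h]
    simp
  have S : ∀ a b c, add a b = add b a → add a c = add c a → add b c = add c b →
      add (add a b) c = add c (add a b) := by
    intro a b c h1 h2 h3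
    calc add (add a b) c = add a (add b c) := (assoc_of_delta a b c (delta_of_comm a b h1)).symm
      _ = add a (add c b) := by rw [h3]
      _ = add (add a c) b := assoc_of_delta a c b (delta_of_comm a c h2)
      _ = add (add c a) b := by rw [h2]
      _ = add c (add a b) := (assoc_of_delta c a b (delta_of_comm c a h2.symm)).symm
  have memC : ∀ b, b ∈ C ↔ δ x b = 1 ∧ δ (neg x) b = 1 := by
    intro b; rw [hC]; exact Iff.rfl
  have memZ : ∀ b, b ∈ Z ↔ b ∈ C ∧ ∀ b' ∈ C, δ b b' = 1 := by
    intro b; rw [hZ]; exact Iff.rfl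
  have commC : ∀ b ∈ C, add x b = add b x ∧ add (neg x) b = add b (neg x) := fun b hb =>
    ⟨comm_of_delta _ _ ((memC b).1 hb).1, comm_of_delta _ _ ((memC b).1 hb).2⟩
  have Cneg : ∀ b ∈ C, neg b ∈ C := by
    intro b hb
    obtain ⟨h1, h2⟩ := commC b hb
    rw [memC]
    constructor
    · apply delta_of_comm
      apply ninj
      rw [haut, haut, negneg]
      exact h2
    · apply delta_of_comm
      apply ninj
      rw [haut, haut, negneg, negneg]
      exact h1
  have Zsub : ∀ a ∈ Z, a ∈ C := fun a ha => ((memZ a).1 ha).1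
  have Zdelta : ∀ a ∈ Z, ∀ b ∈ C, δ a b = 1 := fun a ha => ((memZ a).1 ha).2
  have Zcomm : ∀ a ∈ Z, ∀ b ∈ C, add a b = add b a := fun a ha b hb =>
    comm_of_delta _ _ (Zdelta a ha b hb)
  have Zzero : zero ∈ Z := by
    rw [memZ]
    refine ⟨?_, ?_⟩
    · rw [memC]
      exact ⟨delta_of_comm _ _ (by rw [h0r, h0l]), delta_of_comm _ _ (by rw [h0r, h0l])⟩
    · intro b' _
      exact delta_of_comm _ _ (by rw [h0l, h0r])
  have Zadd : ∀ a ∈ Z, ∀ b ∈ Z, add a b ∈ Z := by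
    intro a ha b hb
    have hab : add a b = add b a := Zcomm a ha b (Zsub b hb)
    have hCa := commC a (Zsub a ha)
    have hCb := commC b (Zsub b hb)
    rw [memZ]
    constructor
    · rw [memC]
      constructor
      · exact delta_of_comm _ _ (S a b x hab hCa.1.symm hCb.1.symm).symm
      · exact delta_of_comm _ _ (S a b (neg x) hab hCa.2.symm hCb.2.symm).symm
    · intro b' hb'
      exact delta_of_comm _ _ (S a b b' hab (Zcomm a ha b' hb') (Zcomm b hb b' hb'))
  have Zneg : ∀ a ∈ Z, neg a ∈ Z := by
    intro a ha
    rw [memZ]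
    refine ⟨Cneg a (Zsub a ha), ?_⟩
    intro b' hb'
    apply delta_of_comm
    apply ninj
    rw [haut, haut, negneg]
    exact Zcomm a ha (neg b') (Cneg b' hb')
  have Zx : x ∈ Z := by
    rw [memZ]
    constructor
    · rw [memC]
      exact ⟨delta_of_comm x x rfl, delta_of_comm _ _ (by rw [hnl, hnr])⟩
    · intro b' hb'
      exact ((memC b').1 hb').1
  have Znat : ∀ a ∈ Z, ∀ n : ℕ, nIter add zero a n ∈ Z := by
    intro a ha n
    induction n with
    | zero => exact Zzero
    | succ n ih => exact Zadd a ha _ ih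
  have Zz : ∀ n : ℤ, zIter add zero neg x n ∈ Z := by
    intro n
    unfold zIter
    split
    · exact Znat x Zx _
    · exact Znat (neg x) (Zneg x Zx) _
  refine ⟨Zadd, Zneg, Zzero, Zz, ?_, ?_⟩
  · intro a ha b hb
    exact Zcomm a ha b (Zsub b hb)
  · intro a ha b hb c _
    exact assoc_of_delta a b c (Zdelta a ha b (Zsub b hb))
end

section
/- A fixed-point-free K-loop B containing an element x of infinite order (i.e. x·n ≠ 0 for all integers n ≠ 0) contains an infinite abelian group: Z(C_B(x)) is infinite, closed under + and −, and + restricted to it is commutative and associative. -/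
/-- Left translation `c ↦ a + c` as a permutation, given unique solvability. -/
noncomputable def lamPerm {B : Type*} (add : B → B → B)
    (huniqr : ∀ a b, ∃! y, add a y = b) (a : B) : Equiv.Perm B where
  toFun := add a
  invFun := fun b => (huniqr a b).choose
  left_inv := fun c => ((huniqr a (add a c)).unique (huniqr a (add a c)).choose_spec.1 rfl)
  right_inv := fun b => (huniqr a b).choose_spec.1

/-- A fixed-point-free K-loop containing an element `x` of infinite
order contains an infinite abelian group, namely `Z(C_B(x))`: it is infinite,
closed under `+` and `−`, and `+` restricted to it is commutative and associative. -/
theorem fpf_kloop_infinite_order_gives_infinite_abelian_group {B : Type*}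
    (add : B → B → B) (zero : B) (neg : B → B)
    (h0l : ∀ a, add zero a = a)
    (h0r : ∀ a, add a zero = a)
    (huniql : ∀ a b, ∃! x, add x a = b)
    (huniqr : ∀ a b, ∃! y, add a y = b)
    (hbol : ∀ a b c, add a (add b (add a c)) = add (add a (add b a)) c)
    (haut : ∀ a b, neg (add a b) = add (neg a) (neg b))
    (hnl : ∀ a, add (neg a) a = zero)
    (hnr : ∀ a, add a (neg a) = zero)
    (hlinv : ∀ a x, add (neg a) (add a x) = x)
    (δ : B → B → Equiv.Perm B)
    (hdelta : ∀ a b c, add a (add b c) = add (add a b) (δ a b c))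
    (hfpf : ∀ φ ∈ Subgroup.closure (Set.range fun p : B × B => δ p.1 p.2),
      (∃ c, c ≠ zero ∧ φ c = c) → φ = 1)
    (x : B)
    -- x has infinite order
    (hx : ∀ n : ℤ, n ≠ 0 → zIter add zero neg x n ≠ zero)
    (C Z : Set B)
    (hC : C = {b : B | δ x b = 1 ∧ δ (neg x) b = 1})
    (hZ : Z = {b ∈ C | ∀ b' ∈ C, δ b b' = 1}) :
    Z.Infinite ∧
    (∀ a ∈ Z, ∀ b ∈ Z, add a b ∈ Z) ∧
    (∀ a ∈ Z, neg a ∈ Z) ∧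
    (∀ a ∈ Z, ∀ b ∈ Z, add a b = add b a) ∧
    (∀ a ∈ Z, ∀ b ∈ Z, ∀ c ∈ Z, add a (add b c) = add (add a b) c) := by
  classical
  set g : B → Equiv.Perm B := lamPerm add huniqr with hg
  have gapp : ∀ a c, g a c = add a c := by intro a c; rw [hg]; rfl
  have lcancel : ∀ a b c : B, add a b = add a c → b = c := by
    intro a b c h
    exact (huniqr a (add a c)).unique h rfl
  have negneg : ∀ a, neg (neg a) = a :=
    fun a => lcancel (neg a) _ _ (by rw [hnr, hnl])
  have hlinv' : ∀ a w, add a (add (neg a) w) = w := by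
    intro a w
    have := hlinv (neg a) w
    rwa [negneg] at this
  have gz : g zero = 1 := by
    ext c; simp [gapp, h0l]
  have gneg : ∀ a, g (neg a) = (g a)⁻¹ := by
    intro a
    have h : g (neg a) * g a = 1 := by
      ext c; simp [gapp, hlinv]
    exact eq_inv_of_mul_eq_one_left h
  have dpoint : ∀ a b c, δ a b = 1 → add a (add b c) = add (add a b) c := by
    intro a b c h
    rw [hdelta a b c, h]
    rfl
  have done' : ∀ a b, (∀ c, add a (add b c) = add (add a b) c) → δ a b = 1 := by
    intro a b h
    ext c
    have h1 := hdelta a b c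
    rw [h c] at h1
    simpa using (lcancel _ _ _ h1).symm
  have dG : ∀ a b, δ a b = 1 → g a * g b = g (add a b) := by
    intro a b h
    ext c
    simp only [Equiv.Perm.mul_apply, gapp]
    exact dpoint a b c h
  have dOfG : ∀ a b, g a * g b = g (add a b) → δ a b = 1 := by
    intro a b h
    refine done' a b fun c => ?_
    have := congrArg (fun p : Equiv.Perm B => p c) h
    simpa only [Equiv.Perm.mul_apply, gapp] using this
  have Jconj : ∀ a b c, δ (neg a) (neg b) c = neg (δ a b (neg c)) := by
    intro a b c
    have h2 := congrArg neg (hdelta a b (neg c))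
    simp only [haut, negneg] at h2
    exact lcancel _ _ _ ((hdelta (neg a) (neg b) c).symm.trans h2)
  have Jone : ∀ a b, δ a b = 1 → δ (neg a) (neg b) = 1 := by
    intro a b h
    ext c
    rw [Jconj a b c, h]
    simp [negneg]
  have K7 : ∀ a b, δ (neg a) (neg b) (add b a) = add a b := by
    intro a b
    have h1 := hdelta (neg a) (neg b) (add b a)
    rw [hlinv b a, hnl a, ← haut] at h1
    have h2 : add (neg (add a b)) (add a b) = zero := hnl _
    exact lcancel _ _ _ (h1.symm.trans h2.symm)
  -- the only use of fixed-point-freeness: commuting elements have trivial precession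
  have circ : ∀ u v, add u v = add v u → δ u v = 1 := by
    intro u v hcomm
    by_cases h0 : add u v = zero
    · have hv : v = neg u := lcancel u v (neg u) (h0.trans (hnr u).symm)
      subst hv
      refine dOfG _ _ ?_
      rw [gneg, mul_inv_cancel, hnr, gz]
    · have hmem : δ (neg u) (neg v) ∈
          Subgroup.closure (Set.range fun p : B × B => δ p.1 p.2) :=
        Subgroup.subset_closure ⟨(neg u, neg v), rfl⟩
      have hfix : δ (neg u) (neg v) (add v u) = add v u := by
        rw [K7 u v]; exact hcomm
      have hne : add v u ≠ zero := fun h => h0 (hcomm.trans h)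
      have h1 : δ (neg u) (neg v) = 1 := hfpf _ hmem ⟨add v u, hne, hfix⟩
      ext c
      have h2 := Jconj (neg u) (neg v) c
      rw [negneg, negneg, h1] at h2
      simpa [negneg] using h2
  have sharp : ∀ u v, δ u v = 1 → δ (neg u) (neg v) = 1 →
      add u v = add v u ∧ δ v u = 1 ∧ g u * g v = g v * g u := by
    intro u v h1 h2
    have guv : g u * g v = g (add u v) := dG u v h1
    have gvu : g v * g u = g (add u v) := by
      ext d
      simp only [Equiv.Perm.mul_apply, gapp]
      have key := dpoint _ _ (add v (add u d)) h2
      rw [hlinv v, hlinv u, ← haut] at key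
      have e2 := congrArg (add (add u v)) key
      rw [hlinv'] at e2
      exact e2.symm
    have hcomm : add u v = add v u := by
      have h3 := congrArg (fun p : Equiv.Perm B => p zero) (guv.trans gvu.symm)
      simpa only [Equiv.Perm.mul_apply, gapp, h0r] using h3
    refine ⟨hcomm, dOfG v u (by rw [← hcomm]; exact gvu), guv.trans gvu.symm⟩
  -- membership characterizations
  have memC : ∀ b, b ∈ C ↔ (δ x b = 1 ∧ δ (neg x) b = 1) := by
    intro b; rw [hC]; exact Iff.rfl
  have memZ : ∀ b, b ∈ Z ↔ (b ∈ C ∧ ∀ b' ∈ C, δ b b' = 1) := by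
    intro b; rw [hZ]; exact Iff.rfl
  have Cneg : ∀ b ∈ C, neg b ∈ C := by
    intro b hb
    rw [memC] at hb ⊢
    refine ⟨?_, Jone _ _ hb.1⟩
    have := Jone _ _ hb.2
    rwa [negneg] at this
  have gsq : ∀ a, g a * g a = g (add a a) := by
    intro a
    ext c
    simp only [Equiv.Perm.mul_apply, gapp]
    have := hbol a zero c
    rwa [h0l, h0l] at this
  have gbol : ∀ a b, g a * g b * g a = g (add a (add b a)) := by
    intro a b
    ext c
    simp only [Equiv.Perm.mul_apply, gapp]
    exact hbol a b c
  have xC : x ∈ C := by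
    rw [memC]
    refine ⟨dOfG _ _ (gsq x), dOfG _ _ ?_⟩
    rw [gneg, hnl, gz, inv_mul_cancel]
  have nxC : neg x ∈ C := Cneg x xC
  -- power machinery
  have gn : ∀ (a : B) (n : ℕ), g (nIter add zero a n) = (g a) ^ n := by
    intro a
    have key : ∀ n, g (nIter add zero a n) = (g a) ^ n ∧
        g (nIter add zero a (n + 1)) = (g a) ^ (n + 1) := by
      intro n
      induction n with
      | zero =>
        constructor
        · simp [nIter, gz]
        · show g (add a (nIter add zero a 0)) = _
          simp [nIter, h0r]
      | succ m ih =>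
        refine ⟨ih.2, ?_⟩
        have hL : nIter add zero a m = ((g a) ^ m) zero := by
          have := congrArg (fun p : Equiv.Perm B => p zero) ih.1
          simpa only [Equiv.Perm.mul_apply, gapp, h0r] using this
        have e1 : add (nIter add zero a m) a = add a (nIter add zero a m) := by
          have h1 := congrArg (fun p : Equiv.Perm B => p a) ih.1
          simp only [gapp] at h1
          have h2 : ((g a) ^ m * g a) zero = (g a * (g a) ^ m) zero := by
            rw [← pow_succ, ← pow_succ']
          simp only [Equiv.Perm.mul_apply, gapp, h0r] at h2
          rw [← hL] at h2
          exact h1.trans h2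
        have hstep : add a (add (nIter add zero a m) a) = nIter add zero a (m + 1 + 1) := by
          show _ = add a (add a (nIter add zero a m))
          rw [e1]
        have hb := gbol a (nIter add zero a m)
        rw [ih.1, hstep] at hb
        rw [← hb]
        group
    exact fun n => (key n).1
  have gzi : ∀ n : ℤ, g (zIter add zero neg x n) = (g x) ^ n := by
    intro n
    unfold zIter
    split_ifs with h
    · rw [gn, ← zpow_natCast, Int.toNat_of_nonneg h]
    · rw [gn, gneg, inv_pow, ← zpow_natCast,
        Int.toNat_of_nonneg (by omega : (0:ℤ) ≤ -n), ← zpow_neg, neg_neg]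
  have ziter0 : ∀ n : ℤ, zIter add zero neg x n = ((g x) ^ n) zero := by
    intro n
    have := congrArg (fun p : Equiv.Perm B => p zero) (gzi n)
    simpa only [gapp, h0r] using this
  have zadd : ∀ m n : ℤ, add (zIter add zero neg x m) (zIter add zero neg x n)
      = zIter add zero neg x (m + n) := by
    intro m n
    rw [ziter0 n, ziter0 (m + n), ← gapp, gzi m, ← Equiv.Perm.mul_apply, ← zpow_add]
  have ziter1 : zIter add zero neg x 1 = x := by
    simp [zIter, nIter, h0r]
  have ziterm1 : zIter add zero neg x (-1) = neg x := by
    norm_num [zIter, nIter, h0r]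
  have zinj : Function.Injective (fun n : ℤ => zIter add zero neg x n) := by
    intro m n h
    simp only at h
    by_contra hne
    have h1 : zIter add zero neg x (-n + m) = zero := by
      rw [ziter0, zpow_add, Equiv.Perm.mul_apply, ← ziter0 m, h, ziter0 n,
        ← Equiv.Perm.mul_apply, ← zpow_add, neg_add_cancel, zpow_zero]
      rfl
    exact hx _ (by omega) h1
  have xnC : ∀ n : ℤ, zIter add zero neg x n ∈ C := by
    intro n
    rw [memC]
    constructor
    · apply dOfG
      have e : add x (zIter add zero neg x n) = zIter add zero neg x (1 + n) := by
        rw [← zadd 1 n, ziter1]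
      rw [e, gzi, gzi, zpow_add, zpow_one]
    · apply dOfG
      have e : add (neg x) (zIter add zero neg x n) = zIter add zero neg x (-1 + n) := by
        rw [← zadd (-1) n, ziterm1]
      rw [e, gzi, gzi, zpow_add, gneg, zpow_neg, zpow_one]
  have sharpC : ∀ b ∈ C, add x b = add b x ∧ δ b x = 1 ∧ g x * g b = g b * g x := by
    intro b hb
    exact sharp x b ((memC b).1 hb).1 (Jone _ _ ((memC b).1 hb).1)
  have sharpCn : ∀ b ∈ C,
      add (neg x) b = add b (neg x) ∧ δ b (neg x) = 1 ∧ g (neg x) * g b = g b * g (neg x) := by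
    intro b hb
    exact sharp (neg x) b ((memC b).1 hb).2 (Jone _ _ ((memC b).1 hb).2)
  have xnZ : ∀ n : ℤ, zIter add zero neg x n ∈ Z := by
    intro n
    rw [memZ]
    refine ⟨xnC n, ?_⟩
    intro c hc
    apply circ
    have hcomm : Commute (g x) (g c) := (sharpC c hc).2.2
    have h1 : add (zIter add zero neg x n) c = ((g x) ^ n) c := by
      rw [← gapp, gzi]
    have h2 : add c (zIter add zero neg x n) = ((g x) ^ n) c := by
      rw [ziter0, ← gapp, ← Equiv.Perm.mul_apply, ← (hcomm.zpow_left n).eq,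
        Equiv.Perm.mul_apply, gapp, h0r]
    rw [h1, h2]
  have Zneg : ∀ a ∈ Z, neg a ∈ Z := by
    intro a ha
    rw [memZ] at ha ⊢
    refine ⟨Cneg a ha.1, ?_⟩
    intro c hc
    have h1 : δ a (neg c) = 1 := ha.2 _ (Cneg c hc)
    have := Jone _ _ h1
    rwa [negneg] at this
  have sharpZ : ∀ a ∈ Z, ∀ c ∈ C, add a c = add c a ∧ δ c a = 1 ∧ g a * g c = g c * g a := by
    intro a ha c hc
    have h1 : δ a c = 1 := ((memZ a).1 ha).2 c hc
    have h2 : δ (neg a) (neg c) = 1 := ((memZ _).1 (Zneg a ha)).2 _ (Cneg c hc)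
    exact sharp a c h1 h2
  refine ⟨?_, ?_, Zneg, ?_, ?_⟩
  · exact Set.infinite_of_injective_forall_mem zinj xnZ
  · -- closure under addition
    intro a ha b hb
    have haC : a ∈ C := ((memZ a).1 ha).1
    have hbC : b ∈ C := ((memZ b).1 hb).1
    have dab : ∀ c, add a (add b c) = add (add a b) c :=
      fun c => dpoint a b c (((memZ a).1 ha).2 b hbC)
    rw [memZ]
    constructor
    · rw [memC]
      constructor
      · apply circ
        have dax : ∀ c, add a (add x c) = add (add a x) c :=
          fun c => dpoint a x c (((memZ a).1 ha).2 x xC)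
        have dxa : ∀ c, add x (add a c) = add (add x a) c :=
          fun c => dpoint x a c ((memC a).1 haC).1
        have commax : add a x = add x a := (sharpZ a ha x xC).1
        have commbx : add x b = add b x := (sharpC b hbC).1
        calc add x (add a b) = add (add x a) b := dxa b
          _ = add (add a x) b := by rw [commax]
          _ = add a (add x b) := (dax b).symm
          _ = add a (add b x) := by rw [commbx]
          _ = add (add a b) x := dab x
      · apply circ
        have dax : ∀ c, add a (add (neg x) c) = add (add a (neg x)) c :=
          fun c => dpoint a (neg x) c (((memZ a).1 ha).2 (neg x) nxC)
        have dxa : ∀ c, add (neg x) (add a c) = add (add (neg x) a) c :=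
          fun c => dpoint (neg x) a c ((memC a).1 haC).2
        have commax : add a (neg x) = add (neg x) a := (sharpZ a ha (neg x) nxC).1
        have commbx : add (neg x) b = add b (neg x) := (sharpCn b hbC).1
        calc add (neg x) (add a b) = add (add (neg x) a) b := dxa b
          _ = add (add a (neg x)) b := by rw [commax]
          _ = add a (add (neg x) b) := (dax b).symm
          _ = add a (add b (neg x)) := by rw [commbx]
          _ = add (add a b) (neg x) := dab (neg x)
    · intro c hc
      apply circ
      have dac : ∀ d, add a (add c d) = add (add a c) d :=
        fun d => dpoint a c d (((memZ a).1 ha).2 c hc)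
      have dca : ∀ d, add c (add a d) = add (add c a) d :=
        fun d => dpoint c a d (sharpZ a ha c hc).2.1
      have commac : add a c = add c a := (sharpZ a ha c hc).1
      have commbc : add b c = add c b := (sharpZ b hb c hc).1
      calc add (add a b) c = add a (add b c) := (dab c).symm
        _ = add a (add c b) := by rw [commbc]
        _ = add (add a c) b := dac b
        _ = add (add c a) b := by rw [commac]
        _ = add c (add a b) := (dca b).symm
  · -- commutativity
    intro a ha b hb
    exact (sharpZ a ha b ((memZ b).1 hb).1).1
  · -- associativity
    intro a ha b hb c _
    exact dpoint a b c (((memZ a).1 ha).2 b ((memZ b).1 hb).1)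
end

section
/- Let B be a fixed-point-free K-loop and let a, b, x, y ∈ B with b + a ≠ 0. If δ_{x,y}(b+a) = a+b, then δ_{x,y} = δ_{a,b}. In particular, in a fixed-point-free K-loop the precession map δ_{a,b} is determined by the pair of elements (a+b, b+a). -/
/-- In a fixed-point-free K-loop, if `b + a ≠ 0` and
`δ_{x,y}(b+a) = a+b`, then `δ_{x,y} = δ_{a,b}`; so the precession map `δ_{a,b}`
is determined by the pair `(a+b, b+a)`. -/
theorem fpf_kloop_precession_determined {B : Type*}
    (add : B → B → B) (zero : B) (neg : B → B)
    (h0l : ∀ a, add zero a = a)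
    (h0r : ∀ a, add a zero = a)
    (huniql : ∀ a b, ∃! x, add x a = b)
    (huniqr : ∀ a b, ∃! y, add a y = b)
    (hbol : ∀ a b c, add a (add b (add a c)) = add (add a (add b a)) c)
    (haut : ∀ a b, neg (add a b) = add (neg a) (neg b))
    (hnl : ∀ a, add (neg a) a = zero)
    (hnr : ∀ a, add a (neg a) = zero)
    (hlinv : ∀ a x, add (neg a) (add a x) = x)
    (δ : B → B → Equiv.Perm B)
    (hdelta : ∀ a b c, add a (add b c) = add (add a b) (δ a b c))
    (hfpf : ∀ φ ∈ Subgroup.closure (Set.range fun p : B × B => δ p.1 p.2),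
      (∃ c, c ≠ zero ∧ φ c = c) → φ = 1)
    -- standard K-loop facts about precession maps
    (hdinv : ∀ a b, (δ a b)⁻¹ = δ b a)
    (hdcomm : ∀ a b, add a b = δ a b (add b a))
    (a b x y : B)
    (hba : add b a ≠ zero)
    (h : δ x y (add b a) = add a b) :
    δ x y = δ a b := by
  have hmem : (δ a b)⁻¹ * δ x y ∈
      Subgroup.closure (Set.range fun p : B × B => δ p.1 p.2) := by
    refine mul_mem (inv_mem ?_) ?_ <;>
      exact Subgroup.subset_closure ⟨(_, _), rfl⟩
  have hfix : ((δ a b)⁻¹ * δ x y) (add b a) = add b a := by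
    have : δ a b (add b a) = add a b := (hdcomm a b).symm
    simp [Equiv.Perm.mul_apply, h, ← this]
  have := hfpf _ hmem ⟨add b a, hba, hfix⟩
  have : δ x y = δ a b * 1 := by rw [← this]; group
  simpa using this
end

section
/- Let (S,s) be a symétron and Y ⊆ S. Then the symétriseur Sym(Y) is a convex subset of S: if x, x' ∈ Sym(Y), then s(x',x) ∈ Sym(Y). -/
/-- In a symétron `(S,s)`, the symétriseur
`Sym(Y) = {x : s(·,x) '' Y = Y}` of any subset `Y` is convex. -/
theorem symetron_symetriseur_convex {S : Type*}
    (s : S → S → S)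
    (hs1 : ∀ x, s x x = x)
    (hs2 : ∀ x y, s (s x y) y = x)
    (hs3 : ∀ x y z, s (s x z) (s y z) = s (s x y) z)
    (hs4 : ∀ x y, ∃! z, s x z = y)
    (Y : Set S) :
    ∀ x ∈ {x : S | (fun y => s y x) '' Y = Y},
      ∀ x' ∈ {x : S | (fun y => s y x) '' Y = Y},
        s x' x ∈ {x : S | (fun y => s y x) '' Y = Y} := by
  intro x hx x' hx'
  have key : ∀ y, s y (s x' x) = s (s (s y x) x') x := by
    intro y
    have h := hs3 (s y x) x' x
    rw [hs2] at h
    exact h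
  show (fun y => s y (s x' x)) '' Y = Y
  have himg : (fun y => s y (s x' x)) '' Y
      = (fun y => s y x) '' ((fun y => s y x') '' ((fun y => s y x) '' Y)) := by
    rw [Set.image_image, Set.image_image]
    exact Set.image_congr fun y _ => key y
  rw [himg, hx, hx', hx]
end

section
/- Let (S,s) be a symétron and Y ⊆ S nonempty, and fix y ∈ Y. Then the map x ↦ s(y,x) is an injective map from Sym(Y) into Y; in particular Sym(Y) injects into Y. -/
/-- In a symétron `(S,s)`, for `y ∈ Y` the map `x ↦ s(y,x)` sends
the symétriseur `Sym(Y)` injectively into `Y`; in particular `Sym(Y)` injects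
into `Y`. -/
theorem symetron_symetriseur_injects_into_Y {S : Type*}
    (s : S → S → S)
    (hs1 : ∀ x, s x x = x)
    (hs2 : ∀ x y, s (s x y) y = x)
    (hs3 : ∀ x y z, s (s x z) (s y z) = s (s x y) z)
    (hs4 : ∀ x y, ∃! z, s x z = y)
    (Y : Set S) (y : S) (hy : y ∈ Y) :
    (∀ x ∈ {x : S | (fun u => s u x) '' Y = Y}, s y x ∈ Y) ∧
    Set.InjOn (fun x => s y x) {x : S | (fun u => s u x) '' Y = Y} := by
  constructor
  · intro x hx
    have : s y x ∈ (fun u => s u x) '' Y := ⟨y, hy, rfl⟩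
    rwa [hx] at this
  · intro x1 _ x2 _ h
    obtain ⟨z, _, hu⟩ := hs4 y (s y x1)
    have h1 := hu x1 rfl
    have h2 := hu x2 h.symm
    rw [h1, h2]
end

section
/- Let (B,+,0,−) be a uniquely 2-divisible K-loop with symétron operation s(x,y) = y + (−x + y). If X ⊆ B is convex, then for every c ∈ B the image s(X,c) = {s(u,c) : u ∈ X} is convex; moreover, if x ∈ X then 0 ∈ s(X, x/2). Thus every nonempty convex subset of B is carried by a symmetry onto a convex subset containing 0. -/
/-- In a uniquely 2-divisible K-loop with symétron operation
`s(x,y) = y + (−x + y)`, the symmetric image `s(X,c)` of a convex set `X` is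
convex, and if `x ∈ X` then `0 ∈ s(X, x/2)`; thus every nonempty convex subset
is carried by a symmetry onto a convex subset containing `0`. -/
theorem kloop_convex_image_convex_containing_zero {B : Type*}
    (add : B → B → B) (zero : B) (neg : B → B)
    (h0l : ∀ a, add zero a = a)
    (h0r : ∀ a, add a zero = a)
    (huniql : ∀ a b, ∃! x, add x a = b)
    (huniqr : ∀ a b, ∃! y, add a y = b)
    (hbol : ∀ a b c, add a (add b (add a c)) = add (add a (add b a)) c)
    (haut : ∀ a b, neg (add a b) = add (neg a) (neg b))
    (hnl : ∀ a, add (neg a) a = zero)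
    (hnr : ∀ a, add a (neg a) = zero)
    (hlinv : ∀ a x, add (neg a) (add a x) = x)
    (hdiv : Function.Bijective (fun x : B => add x x))
    (s : B → B → B)
    (hs : ∀ x y, s x y = add y (add (neg x) y))
    (X : Set B)
    (hXconv : ∀ x ∈ X, ∀ y ∈ X, s x y ∈ X) :
    (∀ c : B, ∀ p ∈ (fun u => s u c) '' X, ∀ q ∈ (fun u => s u c) '' X,
      s p q ∈ (fun u => s u c) '' X) ∧
    (∀ x ∈ X, ∀ h : B, add h h = x → zero ∈ (fun u => s u h) '' X) ∧
    (X.Nonempty → ∃ c : B,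
      (∀ p ∈ (fun u => s u c) '' X, ∀ q ∈ (fun u => s u c) '' X,
        s p q ∈ (fun u => s u c) '' X) ∧ zero ∈ (fun u => s u c) '' X) := by
  have negneg : ∀ a, neg (neg a) = a := fun a =>
    (huniql (neg a) zero).unique (hnl (neg a)) (hnr a)
  have F2 : ∀ a x, add a (add (neg a) x) = x := fun a x => by
    have := hlinv (neg a) x; rwa [negneg] at this
  -- the key symmetry identity
  have key : ∀ u v c, s (s u c) (s v c) = s (s u v) c := by
    intro u v c
    have hP : neg (s u c) = add (neg c) (add u (neg c)) := by
      rw [hs, haut, haut, negneg]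
    have hW : neg (s u v) = add (neg v) (add u (neg v)) := by
      rw [hs, haut, haut, negneg]
    have main : ∀ t, add (s (s u c) (s v c)) t = add (s (s u v) c) t := by
      intro t
      rw [hs (s u c) (s v c), hs (s u v) c, hP, hW, hs v c]
      set c' := neg c
      set v' := neg v
      set Q := add c (add v' c) with hQ
      calc add (add Q (add (add c' (add u c')) Q)) t
          = add Q (add (add c' (add u c')) (add Q t)) := (hbol Q _ t).symm
        _ = add Q (add c' (add u (add c' (add Q t)))) := by
              rw [hbol c' u (add Q t)]
        _ = add Q (add c' (add u (add c' (add c (add v' (add c t)))))) := by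
              rw [hQ, hbol c v' t]
        _ = add Q (add c' (add u (add v' (add c t)))) := by
              rw [hlinv c (add v' (add c t))]
        _ = add c (add v' (add c (add c' (add u (add v' (add c t)))))) := by
              rw [hQ, hbol c v' (add c' (add u (add v' (add c t))))]
        _ = add c (add v' (add u (add v' (add c t)))) := by
              rw [F2 c (add u (add v' (add c t)))]
        _ = add c (add (add v' (add u v')) (add c t)) := by
              rw [hbol v' u (add c t)]
        _ = add (add c (add (add v' (add u v')) c)) t := hbol c _ t
    have h := main zero
    rwa [h0r, h0r] at h
  have part1 : ∀ c : B, ∀ p ∈ (fun u => s u c) '' X, ∀ q ∈ (fun u => s u c) '' X,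
      s p q ∈ (fun u => s u c) '' X := by
    rintro c p ⟨u, hu, rfl⟩ q ⟨v, hv, rfl⟩
    exact ⟨s u v, hXconv u hu v hv, (key u v c).symm⟩
  have part2 : ∀ x ∈ X, ∀ h : B, add h h = x → zero ∈ (fun u => s u h) '' X := by
    intro x hx h hh
    refine ⟨x, hx, ?_⟩
    show s x h = zero
    have hnx : neg x = add (neg h) (neg h) := by rw [← hh, haut]
    have f6 : add (add (neg h) (neg h)) h = neg h := by
      have hb := hbol (neg h) zero h
      rw [h0l, h0l, hnl, h0r] at hb
      exact hb.symm
    rw [hs, hnx, f6, hnr]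
  refine ⟨part1, part2, ?_⟩
  rintro ⟨x, hx⟩
  obtain ⟨h, hh⟩ := hdiv.2 x
  exact ⟨h, part1 h, part2 x hx h hh⟩
end

section
/- Let M be a structure in the first-order language with a single binary function symbol, whose interpretation s makes M a symétron, and assume there is no infinite strictly decreasing chain of definable convex subsets of M (this descending chain condition holds in every ω-stable symétron). Then every definable set A ⊆ M can be written as A = X_1 ∪ … ∪ X_n, where X_1, …, X_n are pairwise disjoint definable indecomposable sets. -/
open FirstOrder

/-- The first-order language with a single binary function symbol. -/
def symLang : FirstOrder.Language where
  Functions := fun n => match n with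
    | 2 => Unit
    | _ => Empty
  Relations := fun _ => Empty

/-- The `symLang`-structure on `M` where the binary function symbol is
interpreted by `s`. -/
def symStructure {M : Type*} (s : M → M → M) : symLang.Structure M where
  funMap {n} f x :=
    match n, f, x with
    | 2, _, x => s (x 0) (x 1)
  RelMap {n} r := r.elim

/-- A subset of `M` definable (with parameters from `M`) in the structure
interpreting the binary function symbol by `s`. -/
def IsDefSet {M : Type*} (s : M → M → M) (Y : Set M) : Prop :=
  letI := symStructure s
  Set.Definable₁ (Set.univ : Set M) symLang Y

/-- A definable set `A` is indecomposable if whenever it is covered by finitely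
many pairwise disjoint definable convex sets, it is contained in one of them. -/
def Indecomposable' {M : Type*} (s : M → M → M) (A : Set M) : Prop :=
  ∀ (n : ℕ) (X : Fin n → Set M),
    (∀ i, IsDefSet s (X i)) →
    (∀ i, ∀ u ∈ X i, ∀ v ∈ X i, s u v ∈ X i) →
    (Pairwise (Function.onFun Disjoint X)) →
    A ⊆ ⋃ i, X i → ∃ i, A ⊆ X i

section Aux

variable {M : Type*} (s : M → M → M)

lemma isDefSet_inter {Y Z : Set M} (hY : IsDefSet s Y) (hZ : IsDefSet s Z) :
    IsDefSet s (Y ∩ Z) := by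
  letI := symStructure s
  have h : { x : Fin 1 → M | x 0 ∈ Y ∩ Z }
      = { x : Fin 1 → M | x 0 ∈ Y } ∩ { x : Fin 1 → M | x 0 ∈ Z } := rfl
  show Set.Definable _ _ _
  rw [h]
  exact Set.Definable.inter hY hZ

lemma isDefSet_univ : IsDefSet s (Set.univ : Set M) := by
  letI := symStructure s
  have h : { x : Fin 1 → M | x 0 ∈ (Set.univ : Set M) } = (Set.univ : Set (Fin 1 → M)) := by
    ext x; simp
  show Set.Definable _ _ _
  rw [h]
  exact Set.definable_univ

/-- Decomposition via a finite family of sets. -/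
def DecompF (A : Set M) : Prop :=
  ∃ F : Finset (Set M), (∀ Y ∈ F, IsDefSet s Y ∧ Indecomposable' s Y) ∧
    ((F : Set (Set M)).Pairwise Disjoint) ∧ A = ⋃₀ (F : Set (Set M))

lemma decompF_empty : DecompF s (∅ : Set M) := ⟨∅, by simp, by simp, by simp⟩

lemma decompF_of_indec {A : Set M} (hd : IsDefSet s A) (hi : Indecomposable' s A) :
    DecompF s A := ⟨{A}, by simp [hd, hi], by simp, by simp⟩

lemma decompF_iUnion (n : ℕ) (A X : Fin n → Set M) (hsub : ∀ i, A i ⊆ X i)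
    (hX : Pairwise (Function.onFun Disjoint X)) (hD : ∀ i, DecompF s (A i)) :
    DecompF s (⋃ i, A i) := by
  classical
  choose F hF hPW hU using hD
  refine ⟨Finset.univ.biUnion F, ?_, ?_, ?_⟩
  · intro Y hY
    simp only [Finset.mem_biUnion, Finset.mem_univ, true_and] at hY
    obtain ⟨i, hi⟩ := hY
    exact hF i Y hi
  · intro Y hY Z hZ hne
    simp only [Finset.coe_biUnion, Finset.coe_univ, Set.mem_iUnion, Finset.mem_coe,
      Finset.mem_univ, Set.iUnion_true] at hY hZ
    obtain ⟨i, -, hi⟩ := hY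
    obtain ⟨j, -, hj⟩ := hZ
    by_cases hij : i = j
    · subst hij
      exact hPW i hi hj hne
    · have h1 : Y ⊆ X i := by
        have h := hsub i; rw [hU i] at h
        exact (Set.subset_sUnion_of_mem hi).trans h
      have h2 : Z ⊆ X j := by
        have h := hsub j; rw [hU j] at h
        exact (Set.subset_sUnion_of_mem hj).trans h
      exact Set.disjoint_of_subset h1 h2 (hX hij)
  · simp only [hU]
    ext x
    simp only [Set.mem_iUnion, Set.mem_sUnion, Finset.mem_coe, Finset.mem_biUnion,
      Finset.mem_univ, true_and]
    tauto

lemma decompF_all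
    (hdcc : ¬ ∃ f : ℕ → Set M,
      (∀ n, IsDefSet s (f n) ∧ ∀ u ∈ f n, ∀ v ∈ f n, s u v ∈ f n) ∧
      ∀ n, f (n + 1) ⊂ f n) :
    ∀ C : Set M, IsDefSet s C → (∀ u ∈ C, ∀ v ∈ C, s u v ∈ C) →
      ∀ A : Set M, IsDefSet s A → A ⊆ C → DecompF s A := by
  classical
  by_contra hcon
  push_neg at hcon
  set Bad : Set M → Prop := fun C => IsDefSet s C ∧ (∀ u ∈ C, ∀ v ∈ C, s u v ∈ C) ∧
    ∃ A, IsDefSet s A ∧ A ⊆ C ∧ ¬ DecompF s A with hBad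
  have step : ∀ C, Bad C → ∃ C', C' ⊂ C ∧ Bad C' := by
    rintro C ⟨hCd, hCc, A, hAd, hAC, hAn⟩
    rcases eq_or_ne A ∅ with rfl | hAne
    · exact absurd (decompF_empty s) hAn
    by_cases hind : Indecomposable' s A
    · exact absurd (decompF_of_indec s hAd hind) hAn
    unfold Indecomposable' at hind
    push_neg at hind
    obtain ⟨n, X, hXd, hXc, hXp, hcov, hnot⟩ := hind
    have hex : ∃ i, ¬ DecompF s (A ∩ X i) := by
      by_contra hall
      push_neg at hall
      have hAeq : A = ⋃ i, A ∩ X i := by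
        ext x
        simp only [Set.mem_iUnion, Set.mem_inter_iff]
        constructor
        · intro hx
          obtain ⟨i, hi⟩ := Set.mem_iUnion.mp (hcov hx)
          exact ⟨i, hx, hi⟩
        · rintro ⟨i, hx, -⟩; exact hx
      rw [hAeq] at hAn
      exact hAn (decompF_iUnion s n _ X (fun i => Set.inter_subset_right) hXp hall)
    obtain ⟨i, hi⟩ := hex
    obtain ⟨a, haA, haX⟩ := Set.not_subset.mp (hnot i)
    refine ⟨C ∩ X i, ?_, ?_⟩
    · rw [Set.ssubset_def]
      refine ⟨Set.inter_subset_left, fun h => haX (h (hAC haA)).2⟩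
    · refine ⟨isDefSet_inter s hCd (hXd i), ?_, A ∩ X i,
        isDefSet_inter s hAd (hXd i), fun x hx => ⟨hAC hx.1, hx.2⟩, hi⟩
      intro u hu v hv
      exact ⟨hCc u hu.1 v hv.1, hXc i u hu.2 v hv.2⟩
  obtain ⟨C0, hC0d, hC0c, A0, h1, h2, h3⟩ := hcon
  have hC0 : Bad C0 := ⟨hC0d, hC0c, A0, h1, h2, h3⟩
  let next : {C // Bad C} → {C // Bad C} :=
    fun p => ⟨(step p.1 p.2).choose, (step p.1 p.2).choose_spec.2⟩
  have hnext : ∀ p, (next p).1 ⊂ p.1 := fun p => (step p.1 p.2).choose_spec.1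
  let f : ℕ → {C // Bad C} := fun n => Nat.recAux ⟨C0, hC0⟩ (fun _ p => next p) n
  apply hdcc
  exact ⟨fun n => (f n).1, fun n => ⟨(f n).2.1, (f n).2.2.1⟩, fun n => hnext (f n)⟩

end Aux

/-- In a symétron `M` (as a first-order structure in the language
with one binary function symbol) satisfying the descending chain condition on
definable convex subsets, every definable set is a finite union of pairwise
disjoint definable indecomposable sets. -/
theorem symetron_decomposition_into_indecomposables {M : Type*}
    (s : M → M → M)
    (hs1 : ∀ x, s x x = x)
    (hs2 : ∀ x y, s (s x y) y = x)
    (hs3 : ∀ x y z, s (s x z) (s y z) = s (s x y) z)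
    (hs4 : ∀ x y, ∃! z, s x z = y)
    -- DCC: no infinite strictly decreasing chain of definable convex subsets
    (hdcc : ¬ ∃ f : ℕ → Set M,
      (∀ n, IsDefSet s (f n) ∧ ∀ u ∈ f n, ∀ v ∈ f n, s u v ∈ f n) ∧
      ∀ n, f (n + 1) ⊂ f n)
    (A : Set M)
    (hAdef : IsDefSet s A) :
    ∃ (n : ℕ) (X : Fin n → Set M),
      (∀ i, IsDefSet s (X i)) ∧
      (∀ i, Indecomposable' s (X i)) ∧
      (Pairwise (Function.onFun Disjoint X)) ∧
      A = ⋃ i, X i := by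
  obtain ⟨F, hmem, hpw, hU⟩ :=
    decompF_all s hdcc Set.univ (isDefSet_univ s) (fun u _ v _ => Set.mem_univ _)
      A hAdef (Set.subset_univ A)
  refine ⟨F.card, fun i => ((F.equivFin.symm i : F) : Set M), ?_, ?_, ?_, ?_⟩
  · exact fun i => (hmem _ (F.equivFin.symm i).2).1
  · exact fun i => (hmem _ (F.equivFin.symm i).2).2
  · intro i j hij
    exact hpw (F.equivFin.symm i).2 (F.equivFin.symm j).2
      (fun h => hij (F.equivFin.symm.injective (Subtype.ext h)))
  · rw [hU]
    ext x
    simp only [Set.mem_sUnion, Finset.mem_coe, Set.mem_iUnion]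
    constructor
    · rintro ⟨Y, hY, hx⟩
      refine ⟨F.equivFin ⟨Y, hY⟩, ?_⟩
      simpa using hx
    · rintro ⟨i, hx⟩
      exact ⟨_, (F.equivFin.symm i).2, hx⟩
end
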